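/- Let F∗A be a twisted group algebra of a finitely generated free abelian group A over a field F. Then F∗A has center exactly F if and only if for every subgroup A₁ ≤ A of finite index, the twisted group algebra F∗A₁ (the F-span of {ā : a ∈ A₁} in F∗A) has center exactly F. -/

import Mathlib

open MulOpposite

universe u v

/-- `KdimLT R k M` means the (Gabriel–Rentschler) Krull dimension of the `R`-module `M`
is `< k` (i.e. `≤ k - 1`), where `KdimLT R 0 M` means `M = 0`. -/
def KdimLT (R : Type u) [Ring R] : ℕ → ModuleCat.{u} R → Prop
  | 0, M => Subsingleton M
  | k+1, M => ∀ f : ℕ → Submodule R M, Antitone f → ∃ N, ∀ i ≥ N,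
      KdimLT R k (ModuleCat.of R (↥(f i) ⧸ Submodule.comap (f i).subtype (f (i+1))))

/-- `IsKrullDim R d` : the ring `R` has (Gabriel–Rentschler) Krull dimension exactly `d`. -/
def IsKrullDim (R : Type u) [Ring R] (d : ℕ) : Prop :=
  KdimLT R (d + 1) (ModuleCat.of R R) ∧ ∀ d' : ℕ, KdimLT R (d' + 1) (ModuleCat.of R R) → d ≤ d'

/-- `PdimLE R k M` : the projective dimension of `M` is at most `k`.  (By Schanuel's lemma
this recursive definition, which uses the canonical free cover at every stage, agrees with
the usual definition of projective dimension.) -/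
def PdimLE (R : Type u) [Ring R] : ℕ → ModuleCat.{u} R → Prop
  | 0, M => Module.Projective R M
  | k+1, M => PdimLE R k
      (ModuleCat.of R (LinearMap.ker (Finsupp.linearCombination R (id : M → M))))

/-- `IsGlobalDim R d` : the ring `R` has global dimension exactly `d`. -/
def IsGlobalDim (R : Type u) [Ring R] (d : ℕ) : Prop :=
  (∀ M : ModuleCat.{u} R, PdimLE R d M) ∧
    ∀ d' : ℕ, (∀ M : ModuleCat.{u} R, PdimLE R d' M) → d ≤ d'

/-- By a theorem of McConnell and Pettit the Krull dimension and the global dimension of a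
quantum torus (twisted group algebra of a f.g. free abelian group) coincide;
`IsDimension R d` says that `d` is this common value `dim R`. -/
def IsDimension (R : Type u) [Ring R] (d : ℕ) : Prop :=
  IsKrullDim R d ∧ IsGlobalDim R d

/-- `IsTwistedGroupAlgebra F R bar τ` : the `F`-algebra `R` is a twisted group algebra
`F∗A` of the free abelian group `A = ℤⁿ` over the field `F`: the units `bar a` (`a ∈ A`)
form an `F`-basis of `R` and multiply according to the 2-cocycle `τ` with values in
`F∖{0}`. -/
structure IsTwistedGroupAlgebra (F : Type u) [Field F] {n : ℕ} (R : Type v) [Ring R]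
    [Algebra F R] (bar : (Fin n → ℤ) → Rˣ) (τ : (Fin n → ℤ) → (Fin n → ℤ) → F) : Prop where
  τ_ne_zero : ∀ a b, τ a b ≠ 0
  cocycle : ∀ a b c, τ a b * τ (a + b) c = τ b c * τ a (b + c)
  mul_bar : ∀ a b, (bar a : R) * bar b = τ a b • (bar (a + b) : R)
  repr_unique : ∀ r : R, ∃! c : (Fin n → ℤ) →₀ F, r = c.sum fun a f => f • (bar a : R)
/-- The `F`-span of `{bar b : b ∈ B}` in `R`; for a subgroup `B ≤ A` this is the
twisted group algebra `F∗B` sitting inside `F∗A`. -/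
def tgaSpan (F : Type u) [Field F] {n : ℕ} {R : Type v} [Ring R] [Algebra F R]
    (bar : (Fin n → ℤ) → Rˣ) (B : AddSubgroup (Fin n → ℤ)) : Submodule F R :=
  Submodule.span F ((fun a => (bar a : R)) '' B)

/-- A right `R`-module `M` is `F∗B`-torsion if every element of `M` is annihilated by a
nonzero element of `F∗B`. -/
def IsTorsionOverSub (F : Type u) [Field F] {n : ℕ} {R : Type v} [Ring R] [Algebra F R]
    (bar : (Fin n → ℤ) → Rˣ) (B : AddSubgroup (Fin n → ℤ)) (M : Type*) [AddCommGroup M]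
    [Module Rᵐᵒᵖ M] : Prop :=
  ∀ m : M, ∃ β ∈ tgaSpan F bar B, β ≠ 0 ∧ op β • m = 0

/-- The rank of a subgroup of the free abelian group `ℤⁿ`. -/
noncomputable def rk {n : ℕ} (B : AddSubgroup (Fin n → ℤ)) : ℕ :=
  Module.finrank ℤ B

/-- The Gelfand–Kirillov dimension (measured over `F`) of a finitely generated right module
over the twisted group algebra `F∗A`, via the Brookes–Groves characterization: it is the
supremum of the ranks of the subgroups `B ≤ A` such that `M` is not `F∗B`-torsion. -/
noncomputable def gkTGA (F : Type u) [Field F] {n : ℕ} {R : Type v} [Ring R] [Algebra F R]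
    (bar : (Fin n → ℤ) → Rˣ) (M : Type*) [AddCommGroup M] [Module Rᵐᵒᵖ M] : ℕ :=
  sSup { r : ℕ | ∃ B : AddSubgroup (Fin n → ℤ),
    ¬ IsTorsionOverSub F bar B M ∧ rk B = r }

/-- The subgroup `⟨x₁, …, x_r⟩` of `ℤⁿ` generated by the first `r` standard basis
vectors. -/
def stdSub (n r : ℕ) : AddSubgroup (Fin n → ℤ) where
  carrier := { x | ∀ i : Fin n, r ≤ (i : ℕ) → x i = 0 }
  zero_mem' := fun i _ => rfl
  add_mem' := by
    intro a b ha hb i hi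
    simp [ha i hi, hb i hi]
  neg_mem' := by
    intro a ha i hi
    simp [ha i hi]

namespace TGAaux

variable {F : Type u} [Field F] {n : ℕ} {R : Type v} [Ring R] [Algebra F R]
  {bar : (Fin n → ℤ) → Rˣ} {τ : (Fin n → ℤ) → (Fin n → ℤ) → F}

/-- The canonical coordinates of an element of `R`. -/
noncomputable def rep (h : IsTwistedGroupAlgebra F R bar τ) (r : R) : (Fin n → ℤ) →₀ F :=
  (h.repr_unique r).choose

lemma rep_spec (h : IsTwistedGroupAlgebra F R bar τ) (r : R) :
    r = (rep h r).sum fun a f => f • (bar a : R) :=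
  (h.repr_unique r).choose_spec.1

lemma rep_eq (h : IsTwistedGroupAlgebra F R bar τ) {r : R} {c : (Fin n → ℤ) →₀ F}
    (hc : r = c.sum fun a f => f • (bar a : R)) : c = rep h r :=
  (h.repr_unique r).choose_spec.2 c hc

lemma rep_add (h : IsTwistedGroupAlgebra F R bar τ) (r s : R) :
    rep h (r + s) = rep h r + rep h s := by
  refine (rep_eq h ?_).symm
  rw [Finsupp.sum_add_index (by simp) (by intro a _ f g; rw [add_smul])]
  rw [← rep_spec h r, ← rep_spec h s]

lemma rep_smul (h : IsTwistedGroupAlgebra F R bar τ) (c : F) (r : R) :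
    rep h (c • r) = c • rep h r := by
  refine (rep_eq h ?_).symm
  rw [Finsupp.sum_smul_index (by simp)]
  simp only [mul_smul]
  rw [← Finsupp.smul_sum, ← rep_spec h r]

/-- The coordinate linear equivalence. -/
noncomputable def coords (h : IsTwistedGroupAlgebra F R bar τ) :
    R ≃ₗ[F] ((Fin n → ℤ) →₀ F) where
  toFun := rep h
  invFun c := c.sum fun a f => f • (bar a : R)
  left_inv r := (rep_spec h r).symm
  right_inv c := (rep_eq h rfl).symm
  map_add' := rep_add h
  map_smul' := rep_smul h

lemma coords_bar (h : IsTwistedGroupAlgebra F R bar τ) (a : Fin n → ℤ) :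
    coords h (bar a : R) = Finsupp.single a 1 := by
  show rep h (bar a : R) = Finsupp.single a 1
  refine (rep_eq h ?_).symm
  rw [Finsupp.sum_single_index (b := (1:F)) (h := fun a f => f • (bar a : R)) (by simp), one_smul]


/-- Linear independence of the `bar a`, in explicit finite-sum form. -/
lemma indep (h : IsTwistedGroupAlgebra F R bar τ) (s : Finset (Fin n → ℤ))
    (g : (Fin n → ℤ) → F) (hg : ∑ a ∈ s, g a • (bar a : R) = 0) :
    ∀ a ∈ s, g a = 0 := by
  intro a₀ ha₀
  have := congrArg (coords h) hg
  rw [map_sum, map_zero] at this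
  simp only [map_smul, coords_bar h] at this
  have := congrArg (fun c => c a₀) this
  simpa [Finsupp.single_apply, Finset.sum_ite_eq' s a₀, ha₀] using this


lemma tau_zero_left (h : IsTwistedGroupAlgebra F R bar τ) (a : Fin n → ℤ) : τ 0 a = τ 0 0 := by
  have k := h.cocycle 0 0 a
  simp only [add_zero, zero_add] at k
  exact (mul_right_cancel₀ (h.τ_ne_zero 0 a) k).symm

lemma tau_zero_right (h : IsTwistedGroupAlgebra F R bar τ) (a : Fin n → ℤ) : τ a 0 = τ 0 0 := by
  have k := h.cocycle a 0 0
  simp only [add_zero, zero_add] at k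
  exact mul_right_cancel₀ (h.τ_ne_zero a 0) k

lemma bar_zero (h : IsTwistedGroupAlgebra F R bar τ) : (bar 0 : R) = τ 0 0 • (1 : R) := by
  have k : (bar (0 : Fin n → ℤ) : R) * bar 0 = τ 0 0 • (bar 0 : R) := by
    simpa using h.mul_bar 0 0
  calc (bar 0 : R) = (bar 0 : R) * bar 0 * ↑(bar (0 : Fin n → ℤ))⁻¹ := by
        rw [Units.mul_inv_cancel_right]
    _ = (τ 0 0 • (bar 0 : R)) * ↑(bar (0 : Fin n → ℤ))⁻¹ := by rw [k]
    _ = τ 0 0 • (1 : R) := by rw [smul_mul_assoc, Units.mul_inv]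

lemma one_eq (h : IsTwistedGroupAlgebra F R bar τ) : (1 : R) = (τ 0 0)⁻¹ • (bar 0 : R) := by
  rw [bar_zero h, smul_smul, inv_mul_cancel₀ (h.τ_ne_zero 0 0), one_smul]

lemma bichar (h : IsTwistedGroupAlgebra F R bar τ) (a b c : Fin n → ℤ) :
    τ (a + b) c * (τ c a * τ c b) = τ c (a + b) * (τ a c * τ b c) := by
  apply mul_left_cancel₀ (h.τ_ne_zero a b)
  have h1 := h.cocycle a b c
  have h2 := h.cocycle a c b; rw [add_comm c b] at h2
  have h3 := h.cocycle c a b; rw [add_comm c a] at h3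
  linear_combination τ c a * τ c b * h1 - τ b c * τ c a * h2 + τ a c * τ b c * h3

/-- The commutation bicharacter. -/
noncomputable def lam (τ : (Fin n → ℤ) → (Fin n → ℤ) → F) (a b : Fin n → ℤ) : F :=
  τ a b / τ b a

lemma lam_eq_one_iff (h : IsTwistedGroupAlgebra F R bar τ) {a b : Fin n → ℤ} :
    lam τ a b = 1 ↔ τ a b = τ b a := div_eq_one_iff_eq (h.τ_ne_zero b a)

lemma lam_add_left (h : IsTwistedGroupAlgebra F R bar τ) (a b c : Fin n → ℤ) :
    lam τ (a + b) c = lam τ a c * lam τ b c := by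
  unfold lam
  rw [div_mul_div_comm, div_eq_div_iff (h.τ_ne_zero _ _)
    (mul_ne_zero (h.τ_ne_zero _ _) (h.τ_ne_zero _ _))]
  linear_combination bichar h a b c

lemma lam_zero_left (h : IsTwistedGroupAlgebra F R bar τ) (c : Fin n → ℤ) :
    lam τ 0 c = 1 := by
  rw [lam_eq_one_iff h, tau_zero_left h c, tau_zero_right h c]

lemma lam_inv (h : IsTwistedGroupAlgebra F R bar τ) (a b : Fin n → ℤ) :
    lam τ a b * lam τ b a = 1 := by
  unfold lam
  rw [div_mul_div_comm, mul_comm (τ b a)]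
  exact div_self (mul_ne_zero (h.τ_ne_zero _ _) (h.τ_ne_zero _ _))

lemma lam_symm (h : IsTwistedGroupAlgebra F R bar τ) (a b : Fin n → ℤ) :
    lam τ a b = (lam τ b a)⁻¹ :=
  eq_inv_of_mul_eq_one_left (lam_inv h a b)

lemma lam_add_right (h : IsTwistedGroupAlgebra F R bar τ) (a b c : Fin n → ℤ) :
    lam τ a (b + c) = lam τ a b * lam τ a c := by
  rw [lam_symm h a (b + c), lam_add_left h b c a, mul_inv, ← lam_symm h a b, ← lam_symm h a c]

lemma lam_nsmul_left (h : IsTwistedGroupAlgebra F R bar τ) (m : ℕ) (a c : Fin n → ℤ) :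
    lam τ (m • a) c = lam τ a c ^ m := by
  induction m with
  | zero => simpa using lam_zero_left h c
  | succ k ih => rw [succ_nsmul, lam_add_left h, ih, pow_succ]

lemma lam_nsmul_right (h : IsTwistedGroupAlgebra F R bar τ) (m : ℕ) (a c : Fin n → ℤ) :
    lam τ a (m • c) = lam τ a c ^ m := by
  rw [lam_symm h a (m • c), lam_nsmul_left h m c a, ← inv_pow, ← lam_symm h a c]


lemma comm_of_commutes (h : IsTwistedGroupAlgebra F R bar τ) {z : R} {b : Fin n → ℤ}
    (hz : z * (bar b : R) = (bar b : R) * z) {a : Fin n → ℤ} (ha : rep h z a ≠ 0) :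
    τ a b = τ b a := by
  set c := rep h z with hc
  set s := c.support with hs
  have hzsum : z = ∑ x ∈ s, c x • (bar x : R) := rep_spec h z
  have hz1 : z * (bar b : R) = ∑ x ∈ s, (c x * τ x b) • (bar (x + b) : R) := by
    rw [hzsum, Finset.sum_mul]
    refine Finset.sum_congr rfl fun x _ => ?_
    rw [smul_mul_assoc, h.mul_bar, smul_smul]
  have hz2 : (bar b : R) * z = ∑ x ∈ s, (c x * τ b x) • (bar (x + b) : R) := by
    rw [hzsum, Finset.mul_sum]
    refine Finset.sum_congr rfl fun x _ => ?_
    rw [mul_smul_comm, h.mul_bar, smul_smul, add_comm b x, mul_comm (c x) (τ b x), mul_comm]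
  have h0 : ∑ x ∈ s, (c x * τ x b - c x * τ b x) • (bar (x + b) : R) = 0 := by
    simp only [sub_smul, Finset.sum_sub_distrib, ← hz1, ← hz2, hz, sub_self]
  have hinj : Function.Injective (· + b) := add_left_injective b
  have hsum : ∑ y ∈ s.image (· + b),
      (c (y - b) * τ (y - b) b - c (y - b) * τ b (y - b)) • (bar y : R) = 0 := by
    rw [Finset.sum_image (fun x _ y _ hxy => hinj hxy)]
    simpa only [add_sub_cancel_right] using h0
  have hmem : a + b ∈ s.image (· + b) :=
    Finset.mem_image_of_mem _ (Finsupp.mem_support_iff.2 ha)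
  have := indep h (s.image (· + b))
    (fun y => c (y - b) * τ (y - b) b - c (y - b) * τ b (y - b)) hsum (a + b) hmem
  simp only [add_sub_cancel_right, ← mul_sub] at this
  rcases mul_eq_zero.1 this with h1 | h1
  · exact absurd h1 ha
  · exact sub_eq_zero.1 h1

lemma commutes_of_comm (h : IsTwistedGroupAlgebra F R bar τ) {a : Fin n → ℤ}
    (hc : ∀ w, τ a w = τ w a) (r : R) : (bar a : R) * r = r * (bar a : R) := by
  rw [rep_spec h r, Finsupp.sum, Finset.mul_sum, Finset.sum_mul]
  refine Finset.sum_congr rfl fun w _ => ?_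
  rw [mul_smul_comm, smul_mul_assoc, h.mul_bar, h.mul_bar, hc w, add_comm]

lemma rep_zero (h : IsTwistedGroupAlgebra F R bar τ) : rep h (0 : R) = 0 :=
  map_zero (coords h)

lemma rep_support_subset (h : IsTwistedGroupAlgebra F R bar τ) (B : AddSubgroup (Fin n → ℤ))
    {z : R} (hz : z ∈ tgaSpan F bar B) : ∀ a, rep h z a ≠ 0 → a ∈ B := by
  refine Submodule.span_induction (p := fun x _ => ∀ a, rep h x a ≠ 0 → a ∈ B)
    ?_ ?_ ?_ ?_ hz
  · rintro x ⟨b, hb, rfl⟩ a ha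
    have : rep h (bar b : R) = Finsupp.single b 1 := coords_bar h b
    rw [this] at ha
    by_contra hab
    exact ha (Finsupp.single_eq_of_ne (fun e => hab (e ▸ hb)))
  · intro a ha
    rw [rep_zero h] at ha
    exact absurd rfl ha
  · intro x y _ _ hx hy a ha
    rw [rep_add h] at ha
    rcases (by by_contra hcon; push_neg at hcon; simp [hcon.1, hcon.2] at ha :
      rep h x a ≠ 0 ∨ rep h y a ≠ 0) with h1 | h1
    · exact hx a h1
    · exact hy a h1
  · intro f x _ hx a ha
    rw [rep_smul h] at ha
    exact hx a fun e => ha (by simp [e])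

lemma algebraMap_mem_span (h : IsTwistedGroupAlgebra F R bar τ) (B : AddSubgroup (Fin n → ℤ))
    (μ : F) : algebraMap F R μ ∈ tgaSpan F bar B := by
  have : algebraMap F R μ = (μ * (τ 0 0)⁻¹) • (bar 0 : R) := by
    rw [Algebra.algebraMap_eq_smul_one, one_eq h, smul_smul]
  rw [this]
  exact Submodule.smul_mem _ _ (Submodule.subset_span ⟨0, B.zero_mem, rfl⟩)

lemma mem_span_top (h : IsTwistedGroupAlgebra F R bar τ) (r : R) :
    r ∈ tgaSpan F bar (⊤ : AddSubgroup (Fin n → ℤ)) := by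
  rw [rep_spec h r, Finsupp.sum]
  exact Submodule.sum_mem _ fun a _ =>
    Submodule.smul_mem _ _ (Submodule.subset_span ⟨a, trivial, rfl⟩)


end TGAaux

/-- **Proposition.** A twisted group algebra `F∗A` has center exactly `F` if and only if
for every subgroup `A₁ ≤ A` of finite index the twisted group algebra `F∗A₁`
(the `F`-span of `{ā : a ∈ A₁}` in `F∗A`) has center exactly `F`. -/
theorem center_eq_F_iff_finiteIndex_center_eq_F {F : Type u} [Field F] {n : ℕ}
    {R : Type u} [Ring R] [Algebra F R]
    {bar : (Fin n → ℤ) → Rˣ} {τ : (Fin n → ℤ) → (Fin n → ℤ) → F}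
    (h : IsTwistedGroupAlgebra F R bar τ) :
    ({z : R | ∀ w : R, z * w = w * z} = Set.range (algebraMap F R)) ↔
      ∀ A₁ : AddSubgroup (Fin n → ℤ), A₁.index ≠ 0 →
        ({z ∈ (tgaSpan F bar A₁ : Set R) |
            ∀ w ∈ (tgaSpan F bar A₁ : Set R), z * w = w * z}
          = Set.range (algebraMap F R)) := by
  classical
  constructor
  · intro hcen A₁ hA₁
    ext z
    constructor
    · rintro ⟨hzmem, hzcomm⟩
      have key : ∀ a, TGAaux.rep h z a ≠ 0 → a = 0 := by
        intro a ha
        have hcommA : ∀ b ∈ A₁, τ a b = τ b a := fun b hb =>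
          TGAaux.comm_of_commutes h
            (hzcomm (bar b) (Submodule.subset_span ⟨b, hb, rfl⟩)) ha
        set m := A₁.index with hm
        have hlam : ∀ w, TGAaux.lam τ (m • a) w = 1 := by
          intro w
          have h1 : TGAaux.lam τ a (m • w) = 1 :=
            (TGAaux.lam_eq_one_iff h).2 (hcommA _ (AddSubgroup.nsmul_index_mem A₁ w))
          rw [TGAaux.lam_nsmul_left h, ← TGAaux.lam_nsmul_right h, h1]
        have hcent : ∀ r : R, (bar (m • a) : R) * r = r * (bar (m • a) : R) :=
          TGAaux.commutes_of_comm h fun w => (TGAaux.lam_eq_one_iff h).1 (hlam w)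
        have hmem : (bar (m • a) : R) ∈ Set.range (algebraMap F R) := by
          rw [← hcen]; exact hcent
        obtain ⟨μ, hμ⟩ := hmem
        have hma : m • a = 0 := by
          by_contra hne
          have e1 : TGAaux.coords h (bar (m • a) : R) = Finsupp.single (m • a) 1 :=
            TGAaux.coords_bar h _
          have e2 : algebraMap F R μ = (μ * (τ 0 0)⁻¹) • (bar 0 : R) := by
            rw [Algebra.algebraMap_eq_smul_one, TGAaux.one_eq h, smul_smul]
          have e3 : TGAaux.coords h (algebraMap F R μ)
              = Finsupp.single 0 (μ * (τ 0 0)⁻¹) := by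
            rw [e2, map_smul, TGAaux.coords_bar h, Finsupp.smul_single, smul_eq_mul,
              mul_one]
          rw [← hμ, e3] at e1
          have e4 : (Finsupp.single (0 : Fin n → ℤ) (μ * (τ 0 0)⁻¹)) (m • a)
              = (Finsupp.single (m • a) (1 : F)) (m • a) := congrArg (fun f => f (m • a)) e1
          rw [Finsupp.single_eq_same, Finsupp.single_eq_of_ne hne] at e4
          exact one_ne_zero e4.symm
        have hmz : (m : ℤ) ≠ 0 := Int.natCast_ne_zero.2 hA₁
        have hza : (m : ℤ) • a = 0 := by rw [Nat.cast_smul_eq_nsmul]; exact hma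
        rcases smul_eq_zero.1 hza with h1 | h1
        · exact absurd h1 hmz
        · exact h1
      have hz0 : TGAaux.rep h z = Finsupp.single 0 (TGAaux.rep h z 0) := by
        ext a
        by_cases ha : a = 0
        · subst ha; simp
        · rw [Finsupp.single_eq_of_ne ha]
          by_contra hne
          exact ha (key a hne)
      obtain ⟨v, hv⟩ : ∃ v, TGAaux.rep h z = Finsupp.single 0 v := ⟨_, hz0⟩
      refine ⟨v * τ 0 0, ?_⟩
      rw [Algebra.algebraMap_eq_smul_one, ← smul_smul, ← TGAaux.bar_zero h]
      conv_rhs => rw [TGAaux.rep_spec h z]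
      rw [hv, Finsupp.sum_single_index (h := fun a f => f • ((bar a : R))) (by simp)]
    · rintro ⟨μ, rfl⟩
      exact ⟨TGAaux.algebraMap_mem_span h A₁ μ, fun w _ => Algebra.commutes μ w⟩
  · intro hall
    have htop := hall ⊤ (by rw [AddSubgroup.index_top]; exact one_ne_zero)
    rw [← htop]
    ext z
    constructor
    · intro hz
      exact ⟨TGAaux.mem_span_top h z, fun w _ => hz w⟩
    · rintro ⟨-, hz⟩ w
      exact hz w (TGAaux.mem_span_top h w)
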